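/- Let ⪯ be a qualitative probability order on 2^[n], T ⊆ [n], and suppose (A_1,…,A_4; B_1,…,B_4) is a trading transform with A_i ≺ T ⪯ B_j for all i,j ∈ [4]. Then the sets A_1,…,A_4 are pairwise distinct and the sets B_1,…,B_4 are pairwise distinct, i.e., |{A_1,…,A_4}| = |{B_1,…,B_4}| = 4. -/

import Mathlib

/-- A qualitative probability order on `2^[n]`. -/
def IsQPO (n : ℕ) (r : Finset (Fin n) → Finset (Fin n) → Prop) : Prop :=
  (∀ A, r A A) ∧
  (∀ A B, r A B ∨ r B A) ∧
  (∀ A B C, r A B → r B C → r A C) ∧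
  (∀ A, r ∅ A) ∧
  (∀ A B C : Finset (Fin n), (A ∪ B) ∩ C = ∅ → (r A B ↔ r (A ∪ C) (B ∪ C)))

/-- The strict relation `A ≺ B`. -/
def strictR {n : ℕ} (r : Finset (Fin n) → Finset (Fin n) → Prop)
    (A B : Finset (Fin n)) : Prop := r A B ∧ ¬ r B A

/-- `(A_1,…,A_k; B_1,…,B_k)` is a trading transform. -/
def IsTradingTransform {n k : ℕ} (A B : Fin k → Finset (Fin n)) : Prop :=
  ∀ i : Fin n,
    (Finset.univ.filter (fun j => i ∈ A j)).card =
    (Finset.univ.filter (fun j => i ∈ B j)).card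

/-! ### Auxiliary machinery: the discrete cone of difference vectors -/

/-- Integer indicator function of a finite set. -/
def qChi {n : ℕ} (S : Finset (Fin n)) : Fin n → ℤ := fun i => if i ∈ S then 1 else 0

lemma qChi01 {n : ℕ} (S : Finset (Fin n)) (i : Fin n) : qChi S i = 0 ∨ qChi S i = 1 := by
  unfold qChi; split <;> simp

lemma qChi_mem {n : ℕ} (S : Finset (Fin n)) (i : Fin n) : i ∈ S ↔ qChi S i = 1 := by
  unfold qChi; split <;> simp_all

/-- Positive part of a `{-1,0,1}`-vector. -/
def qPos {n : ℕ} (z : Fin n → ℤ) : Finset (Fin n) := Finset.univ.filter (fun i => z i = 1)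

/-- Negative part of a `{-1,0,1}`-vector. -/
def qNeg {n : ℕ} (z : Fin n → ℤ) : Finset (Fin n) := Finset.univ.filter (fun i => z i = -1)

/-- Membership of a difference vector in the discrete cone of `r`. -/
def qInC {n : ℕ} (r : Finset (Fin n) → Finset (Fin n) → Prop) (z : Fin n → ℤ) : Prop :=
  r (qNeg z) (qPos z)

/-- A vector has entries in `[-1,1]`. -/
def qRng {n : ℕ} (z : Fin n → ℤ) : Prop := ∀ i, -1 ≤ z i ∧ z i ≤ 1

lemma qRngDiff {n : ℕ} (U V : Finset (Fin n)) : qRng (qChi V - qChi U) := by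
  intro i
  have h1 := qChi01 U i; have h2 := qChi01 V i
  simp only [Pi.sub_apply]; omega

lemma qRngNeg {n : ℕ} {z : Fin n → ℤ} (h : qRng z) : qRng (-z) := by
  intro i; have := h i; simp only [Pi.neg_apply]; omega

/-- Normalization: `U ⪯ V ↔ U\V ⪯ V\U`. -/
lemma qNorm {n : ℕ} {r : Finset (Fin n) → Finset (Fin n) → Prop} (hr : IsQPO n r)
    (U V : Finset (Fin n)) : r U V ↔ r (U \ V) (V \ U) := by
  have h := hr.2.2.2.2 (U \ V) (V \ U) (U ∩ V) (by
    ext i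
    simp only [Finset.mem_inter, Finset.mem_union, Finset.mem_sdiff, Finset.notMem_empty,
      iff_false]
    tauto)
  have e1 : U \ V ∪ U ∩ V = U := Finset.sdiff_union_inter U V
  have e2 : V \ U ∪ U ∩ V = V := by rw [Finset.inter_comm]; exact Finset.sdiff_union_inter V U
  rw [e1, e2] at h
  exact h.symm

/-- Bridge between the relation and the cone. -/
lemma qBridge {n : ℕ} {r : Finset (Fin n) → Finset (Fin n) → Prop} (hr : IsQPO n r)
    (U V : Finset (Fin n)) : r U V ↔ qInC r (qChi V - qChi U) := by
  have eN : qNeg (qChi V - qChi U) = U \ V := by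
    ext i
    simp only [qNeg, Finset.mem_filter, Finset.mem_univ, true_and, Pi.sub_apply,
      Finset.mem_sdiff, qChi_mem]
    have := qChi01 U i; have := qChi01 V i
    omega
  have eP : qPos (qChi V - qChi U) = V \ U := by
    ext i
    simp only [qPos, Finset.mem_filter, Finset.mem_univ, true_and, Pi.sub_apply,
      Finset.mem_sdiff, qChi_mem]
    have := qChi01 U i; have := qChi01 V i
    omega
  rw [qInC, eN, eP]
  exact qNorm hr U V

/-- Cone addition: if `z₁, z₂` and `z₁+z₂` all have entries in `[-1,1]` and `z₁, z₂` are in the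
cone, then so is `z₁+z₂`. -/
lemma qAdd {n : ℕ} {r : Finset (Fin n) → Finset (Fin n) → Prop} (hr : IsQPO n r)
    {z1 z2 : Fin n → ℤ} (h1 : qRng z1) (h2 : qRng z2) (h12 : qRng (z1 + z2))
    (c1 : qInC r z1) (c2 : qInC r z2) : qInC r (z1 + z2) := by
  have d1 : ((qNeg z1 ∪ qPos z1) ∩ (qNeg z2 \ qPos z1)) = ∅ := by
    ext i
    simp only [Finset.mem_inter, Finset.mem_union, Finset.mem_sdiff, qNeg, qPos,
      Finset.mem_filter, Finset.mem_univ, true_and, Finset.notMem_empty, iff_false]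
    have := h12 i; simp only [Pi.add_apply] at this
    omega
  have s1 : r (qNeg z1 ∪ (qNeg z2 \ qPos z1)) (qPos z1 ∪ (qNeg z2 \ qPos z1)) :=
    (hr.2.2.2.2 _ _ _ d1).mp c1
  have d2 : ((qNeg z2 ∪ qPos z2) ∩ (qPos z1 \ qNeg z2)) = ∅ := by
    ext i
    simp only [Finset.mem_inter, Finset.mem_union, Finset.mem_sdiff, qNeg, qPos,
      Finset.mem_filter, Finset.mem_univ, true_and, Finset.notMem_empty, iff_false]
    have := h12 i; simp only [Pi.add_apply] at this
    omega
  have s2 : r (qNeg z2 ∪ (qPos z1 \ qNeg z2)) (qPos z2 ∪ (qPos z1 \ qNeg z2)) :=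
    (hr.2.2.2.2 _ _ _ d2).mp c2
  have e : qPos z1 ∪ (qNeg z2 \ qPos z1) = qNeg z2 ∪ (qPos z1 \ qNeg z2) := by
    rw [Finset.union_sdiff_self_eq_union, Finset.union_sdiff_self_eq_union, Finset.union_comm]
  rw [e] at s1
  have tr : r (qNeg z1 ∪ (qNeg z2 \ qPos z1)) (qPos z2 ∪ (qPos z1 \ qNeg z2)) :=
    hr.2.2.1 _ _ _ s1 s2
  have h' := (qNorm hr _ _).mp tr
  have eN : (qNeg z1 ∪ (qNeg z2 \ qPos z1)) \ (qPos z2 ∪ (qPos z1 \ qNeg z2)) = qNeg (z1 + z2) := by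
    ext i
    simp only [Finset.mem_sdiff, Finset.mem_union, qNeg, qPos, Finset.mem_filter,
      Finset.mem_univ, true_and, Pi.add_apply]
    have := h1 i; have := h2 i; have := h12 i; simp only [Pi.add_apply] at *
    omega
  have eP : (qPos z2 ∪ (qPos z1 \ qNeg z2)) \ (qNeg z1 ∪ (qNeg z2 \ qPos z1)) = qPos (z1 + z2) := by
    ext i
    simp only [Finset.mem_sdiff, Finset.mem_union, qNeg, qPos, Finset.mem_filter,
      Finset.mem_univ, true_and, Pi.add_apply]
    have := h1 i; have := h2 i; have := h12 i; simp only [Pi.add_apply] at *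
    omega
  rw [eN, eP] at h'
  exact h'

/-- Composition of two difference facts along a common middle set. -/
lemma qComb {n : ℕ} {r : Finset (Fin n) → Finset (Fin n) → Prop} (hr : IsQPO n r)
    (P Q S : Finset (Fin n)) (hPQ : qInC r (qChi Q - qChi P)) (hQS : qInC r (qChi S - qChi Q)) :
    qInC r (qChi S - qChi P) := by
  have e : (qChi Q - qChi P) + (qChi S - qChi Q) = qChi S - qChi P := by ring
  have := qAdd hr (qRngDiff P Q) (qRngDiff Q S) (by rw [e]; exact qRngDiff P S) hPQ hQS
  rwa [e] at this

/-- The core contradiction for a repeated `A`-set. -/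
lemma qMainA {n : ℕ} {r : Finset (Fin n) → Finset (Fin n) → Prop} (hr : IsQPO n r)
    (T X C D B1 B2 B3 B4 : Finset (Fin n))
    (hcnt : ∀ i, qChi X i + qChi X i + qChi C i + qChi D i
      = qChi B1 i + qChi B2 i + qChi B3 i + qChi B4 i)
    (hXT : r X T) (hTX : ¬ r T X) (hCT : r C T) (hDT : r D T)
    (hB1 : r T B1) (hB2 : r T B2) (hB3 : r T B3) (hB4 : r T B4) : False := by
  have a1 : qInC r (qChi T - qChi X) := (qBridge hr X T).mp hXT
  have c1 : qInC r (qChi T - qChi C) := (qBridge hr C T).mp hCT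
  have d1 : qInC r (qChi T - qChi D) := (qBridge hr D T).mp hDT
  have b1 : qInC r (qChi B1 - qChi T) := (qBridge hr T B1).mp hB1
  have b2 : qInC r (qChi B2 - qChi T) := (qBridge hr T B2).mp hB2
  have b3 : qInC r (qChi B3 - qChi T) := (qBridge hr T B3).mp hB3
  have b4 : qInC r (qChi B4 - qChi T) := (qBridge hr T B4).mp hB4
  have s1 : qInC r (qChi B1 - qChi X) := qComb hr X T B1 a1 b1
  have s2 : qInC r (qChi B2 - qChi C) := qComb hr C T B2 c1 b2
  have s3 : qInC r (qChi B3 - qChi X) := qComb hr X T B3 a1 b3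
  have s4 : qInC r (qChi B4 - qChi D) := qComb hr D T B4 d1 b4
  have rngz : qRng ((qChi B1 - qChi X) + (qChi B2 - qChi C)) := by
    intro i
    have hc := hcnt i
    have := qChi01 X i; have := qChi01 C i; have := qChi01 D i; have := qChi01 B1 i
    have := qChi01 B2 i; have := qChi01 B3 i; have := qChi01 B4 i
    simp only [Pi.add_apply, Pi.sub_apply]
    omega
  have rngz' : qRng ((qChi B3 - qChi X) + (qChi B4 - qChi D)) := by
    intro i
    have hc := hcnt i
    have := qChi01 X i; have := qChi01 C i; have := qChi01 D i; have := qChi01 B1 i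
    have := qChi01 B2 i; have := qChi01 B3 i; have := qChi01 B4 i
    simp only [Pi.add_apply, Pi.sub_apply]
    omega
  have zz : qInC r ((qChi B1 - qChi X) + (qChi B2 - qChi C)) :=
    qAdd hr (qRngDiff X B1) (qRngDiff C B2) rngz s1 s2
  have zz' : qInC r ((qChi B3 - qChi X) + (qChi B4 - qChi D)) :=
    qAdd hr (qRngDiff X B3) (qRngDiff D B4) rngz' s3 s4
  have ekey : (qChi B3 - qChi X) + (qChi B4 - qChi D)
      = -((qChi B1 - qChi X) + (qChi B2 - qChi C)) := by
    funext i
    have hc := hcnt i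
    simp only [Pi.add_apply, Pi.sub_apply, Pi.neg_apply]
    omega
  have nzz : ¬ qInC r (-((qChi B1 - qChi X) + (qChi B2 - qChi C))) := by
    intro h
    have e2 : (-((qChi B1 - qChi X) + (qChi B2 - qChi C))) + (qChi B2 - qChi C)
        = qChi X - qChi B1 := by ring
    have h' : qInC r (qChi X - qChi B1) := by
      have := qAdd hr (qRngNeg rngz) (qRngDiff C B2) (by rw [e2]; exact qRngDiff B1 X) h s2
      rwa [e2] at this
    have h'' : qInC r (qChi X - qChi T) := qComb hr T B1 X b1 h'
    exact hTX ((qBridge hr T X).mpr h'')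
  exact nzz (ekey ▸ zz')

/-- The core contradiction for a repeated `B`-set. -/
lemma qMainB {n : ℕ} {r : Finset (Fin n) → Finset (Fin n) → Prop} (hr : IsQPO n r)
    (T Y A1 A2 A3 A4 B3 B4 : Finset (Fin n))
    (hcnt : ∀ i, qChi A1 i + qChi A2 i + qChi A3 i + qChi A4 i
      = qChi Y i + qChi Y i + qChi B3 i + qChi B4 i)
    (hA1 : r A1 T) (hTA1 : ¬ r T A1) (hA2 : r A2 T) (hA3 : r A3 T) (hA4 : r A4 T)
    (hY : r T Y) (hB3 : r T B3) (hB4 : r T B4) : False := by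
  have y1 : qInC r (qChi Y - qChi T) := (qBridge hr T Y).mp hY
  have w3 : qInC r (qChi B3 - qChi T) := (qBridge hr T B3).mp hB3
  have w4 : qInC r (qChi B4 - qChi T) := (qBridge hr T B4).mp hB4
  have v1 : qInC r (qChi T - qChi A1) := (qBridge hr A1 T).mp hA1
  have v2 : qInC r (qChi T - qChi A2) := (qBridge hr A2 T).mp hA2
  have v3 : qInC r (qChi T - qChi A3) := (qBridge hr A3 T).mp hA3
  have v4 : qInC r (qChi T - qChi A4) := (qBridge hr A4 T).mp hA4
  have s1 : qInC r (qChi Y - qChi A1) := qComb hr A1 T Y v1 y1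
  have s2 : qInC r (qChi B3 - qChi A2) := qComb hr A2 T B3 v2 w3
  have s3 : qInC r (qChi Y - qChi A3) := qComb hr A3 T Y v3 y1
  have s4 : qInC r (qChi B4 - qChi A4) := qComb hr A4 T B4 v4 w4
  have rngz : qRng ((qChi Y - qChi A1) + (qChi B3 - qChi A2)) := by
    intro i
    have hc := hcnt i
    have := qChi01 A1 i; have := qChi01 A2 i; have := qChi01 A3 i; have := qChi01 A4 i
    have := qChi01 Y i; have := qChi01 B3 i; have := qChi01 B4 i
    simp only [Pi.add_apply, Pi.sub_apply]
    omega
  have rngz' : qRng ((qChi Y - qChi A3) + (qChi B4 - qChi A4)) := by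
    intro i
    have hc := hcnt i
    have := qChi01 A1 i; have := qChi01 A2 i; have := qChi01 A3 i; have := qChi01 A4 i
    have := qChi01 Y i; have := qChi01 B3 i; have := qChi01 B4 i
    simp only [Pi.add_apply, Pi.sub_apply]
    omega
  have zz : qInC r ((qChi Y - qChi A1) + (qChi B3 - qChi A2)) :=
    qAdd hr (qRngDiff A1 Y) (qRngDiff A2 B3) rngz s1 s2
  have zz' : qInC r ((qChi Y - qChi A3) + (qChi B4 - qChi A4)) :=
    qAdd hr (qRngDiff A3 Y) (qRngDiff A4 B4) rngz' s3 s4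
  have ekey : (qChi Y - qChi A3) + (qChi B4 - qChi A4)
      = -((qChi Y - qChi A1) + (qChi B3 - qChi A2)) := by
    funext i
    have hc := hcnt i
    simp only [Pi.add_apply, Pi.sub_apply, Pi.neg_apply]
    omega
  have nzz : ¬ qInC r (-((qChi Y - qChi A1) + (qChi B3 - qChi A2))) := by
    intro h
    have e2 : (-((qChi Y - qChi A1) + (qChi B3 - qChi A2))) + (qChi B3 - qChi A2)
        = qChi A1 - qChi Y := by ring
    have h' : qInC r (qChi A1 - qChi Y) := by
      have := qAdd hr (qRngNeg rngz) (qRngDiff A2 B3) (by rw [e2]; exact qRngDiff Y A1) h s2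
      rwa [e2] at this
    have h'' : qInC r (qChi A1 - qChi T) := qComb hr T Y A1 y1 h'
    exact hTA1 ((qBridge hr T A1).mpr h'')
  exact nzz (ekey ▸ zz')

set_option maxHeartbeats 1000000 in
theorem stmt12 {n : ℕ} (r : Finset (Fin n) → Finset (Fin n) → Prop)
    (hr : IsQPO n r) (T : Finset (Fin n)) (A B : Fin 4 → Finset (Fin n))
    (htt : IsTradingTransform A B)
    (hAT : ∀ i, strictR r (A i) T) (hTB : ∀ j, r T (B j)) :
    Function.Injective A ∧ Function.Injective B := by
  have count_eq : ∀ i : Fin n,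
      qChi (A 0) i + qChi (A 1) i + qChi (A 2) i + qChi (A 3) i
        = qChi (B 0) i + qChi (B 1) i + qChi (B 2) i + qChi (B 3) i := by
    intro i
    have h := htt i
    rw [Finset.card_filter, Finset.card_filter, Fin.sum_univ_four, Fin.sum_univ_four] at h
    simp only [qChi]
    split_ifs at h ⊢ <;> omega
  constructor
  · intro p q hpq
    by_contra hne
    fin_cases p <;> fin_cases q <;> first
    | exact absurd rfl hne
    | exact qMainA hr T (A 0) (A 2) (A 3) (B 0) (B 1) (B 2) (B 3)
        (fun i => by have hc := count_eq i; rw [show A 1 = A 0 from hpq.symm] at hc; omega)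
        (hAT 0).1 (hAT 0).2 (hAT 2).1 (hAT 3).1 (hTB 0) (hTB 1) (hTB 2) (hTB 3)
    | exact qMainA hr T (A 0) (A 2) (A 3) (B 0) (B 1) (B 2) (B 3)
        (fun i => by have hc := count_eq i; rw [show A 1 = A 0 from hpq] at hc; omega)
        (hAT 0).1 (hAT 0).2 (hAT 2).1 (hAT 3).1 (hTB 0) (hTB 1) (hTB 2) (hTB 3)
    | exact qMainA hr T (A 0) (A 1) (A 3) (B 0) (B 1) (B 2) (B 3)
        (fun i => by have hc := count_eq i; rw [show A 2 = A 0 from hpq.symm] at hc; omega)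
        (hAT 0).1 (hAT 0).2 (hAT 1).1 (hAT 3).1 (hTB 0) (hTB 1) (hTB 2) (hTB 3)
    | exact qMainA hr T (A 0) (A 1) (A 3) (B 0) (B 1) (B 2) (B 3)
        (fun i => by have hc := count_eq i; rw [show A 2 = A 0 from hpq] at hc; omega)
        (hAT 0).1 (hAT 0).2 (hAT 1).1 (hAT 3).1 (hTB 0) (hTB 1) (hTB 2) (hTB 3)
    | exact qMainA hr T (A 0) (A 1) (A 2) (B 0) (B 1) (B 2) (B 3)
        (fun i => by have hc := count_eq i; rw [show A 3 = A 0 from hpq.symm] at hc; omega)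
        (hAT 0).1 (hAT 0).2 (hAT 1).1 (hAT 2).1 (hTB 0) (hTB 1) (hTB 2) (hTB 3)
    | exact qMainA hr T (A 0) (A 1) (A 2) (B 0) (B 1) (B 2) (B 3)
        (fun i => by have hc := count_eq i; rw [show A 3 = A 0 from hpq] at hc; omega)
        (hAT 0).1 (hAT 0).2 (hAT 1).1 (hAT 2).1 (hTB 0) (hTB 1) (hTB 2) (hTB 3)
    | exact qMainA hr T (A 1) (A 0) (A 3) (B 0) (B 1) (B 2) (B 3)
        (fun i => by have hc := count_eq i; rw [show A 2 = A 1 from hpq.symm] at hc; omega)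
        (hAT 1).1 (hAT 1).2 (hAT 0).1 (hAT 3).1 (hTB 0) (hTB 1) (hTB 2) (hTB 3)
    | exact qMainA hr T (A 1) (A 0) (A 3) (B 0) (B 1) (B 2) (B 3)
        (fun i => by have hc := count_eq i; rw [show A 2 = A 1 from hpq] at hc; omega)
        (hAT 1).1 (hAT 1).2 (hAT 0).1 (hAT 3).1 (hTB 0) (hTB 1) (hTB 2) (hTB 3)
    | exact qMainA hr T (A 1) (A 0) (A 2) (B 0) (B 1) (B 2) (B 3)
        (fun i => by have hc := count_eq i; rw [show A 3 = A 1 from hpq.symm] at hc; omega)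
        (hAT 1).1 (hAT 1).2 (hAT 0).1 (hAT 2).1 (hTB 0) (hTB 1) (hTB 2) (hTB 3)
    | exact qMainA hr T (A 1) (A 0) (A 2) (B 0) (B 1) (B 2) (B 3)
        (fun i => by have hc := count_eq i; rw [show A 3 = A 1 from hpq] at hc; omega)
        (hAT 1).1 (hAT 1).2 (hAT 0).1 (hAT 2).1 (hTB 0) (hTB 1) (hTB 2) (hTB 3)
    | exact qMainA hr T (A 2) (A 0) (A 1) (B 0) (B 1) (B 2) (B 3)
        (fun i => by have hc := count_eq i; rw [show A 3 = A 2 from hpq.symm] at hc; omega)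
        (hAT 2).1 (hAT 2).2 (hAT 0).1 (hAT 1).1 (hTB 0) (hTB 1) (hTB 2) (hTB 3)
    | exact qMainA hr T (A 2) (A 0) (A 1) (B 0) (B 1) (B 2) (B 3)
        (fun i => by have hc := count_eq i; rw [show A 3 = A 2 from hpq] at hc; omega)
        (hAT 2).1 (hAT 2).2 (hAT 0).1 (hAT 1).1 (hTB 0) (hTB 1) (hTB 2) (hTB 3)
  · intro p q hpq
    by_contra hne
    fin_cases p <;> fin_cases q <;> first
    | exact absurd rfl hne
    | exact qMainB hr T (B 0) (A 0) (A 1) (A 2) (A 3) (B 2) (B 3)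
        (fun i => by have hc := count_eq i; rw [show B 1 = B 0 from hpq.symm] at hc; omega)
        (hAT 0).1 (hAT 0).2 (hAT 1).1 (hAT 2).1 (hAT 3).1 (hTB 0) (hTB 2) (hTB 3)
    | exact qMainB hr T (B 0) (A 0) (A 1) (A 2) (A 3) (B 2) (B 3)
        (fun i => by have hc := count_eq i; rw [show B 1 = B 0 from hpq] at hc; omega)
        (hAT 0).1 (hAT 0).2 (hAT 1).1 (hAT 2).1 (hAT 3).1 (hTB 0) (hTB 2) (hTB 3)
    | exact qMainB hr T (B 0) (A 0) (A 1) (A 2) (A 3) (B 1) (B 3)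
        (fun i => by have hc := count_eq i; rw [show B 2 = B 0 from hpq.symm] at hc; omega)
        (hAT 0).1 (hAT 0).2 (hAT 1).1 (hAT 2).1 (hAT 3).1 (hTB 0) (hTB 1) (hTB 3)
    | exact qMainB hr T (B 0) (A 0) (A 1) (A 2) (A 3) (B 1) (B 3)
        (fun i => by have hc := count_eq i; rw [show B 2 = B 0 from hpq] at hc; omega)
        (hAT 0).1 (hAT 0).2 (hAT 1).1 (hAT 2).1 (hAT 3).1 (hTB 0) (hTB 1) (hTB 3)
    | exact qMainB hr T (B 0) (A 0) (A 1) (A 2) (A 3) (B 1) (B 2)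
        (fun i => by have hc := count_eq i; rw [show B 3 = B 0 from hpq.symm] at hc; omega)
        (hAT 0).1 (hAT 0).2 (hAT 1).1 (hAT 2).1 (hAT 3).1 (hTB 0) (hTB 1) (hTB 2)
    | exact qMainB hr T (B 0) (A 0) (A 1) (A 2) (A 3) (B 1) (B 2)
        (fun i => by have hc := count_eq i; rw [show B 3 = B 0 from hpq] at hc; omega)
        (hAT 0).1 (hAT 0).2 (hAT 1).1 (hAT 2).1 (hAT 3).1 (hTB 0) (hTB 1) (hTB 2)
    | exact qMainB hr T (B 1) (A 0) (A 1) (A 2) (A 3) (B 0) (B 3)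
        (fun i => by have hc := count_eq i; rw [show B 2 = B 1 from hpq.symm] at hc; omega)
        (hAT 0).1 (hAT 0).2 (hAT 1).1 (hAT 2).1 (hAT 3).1 (hTB 1) (hTB 0) (hTB 3)
    | exact qMainB hr T (B 1) (A 0) (A 1) (A 2) (A 3) (B 0) (B 3)
        (fun i => by have hc := count_eq i; rw [show B 2 = B 1 from hpq] at hc; omega)
        (hAT 0).1 (hAT 0).2 (hAT 1).1 (hAT 2).1 (hAT 3).1 (hTB 1) (hTB 0) (hTB 3)
    | exact qMainB hr T (B 1) (A 0) (A 1) (A 2) (A 3) (B 0) (B 2)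
        (fun i => by have hc := count_eq i; rw [show B 3 = B 1 from hpq.symm] at hc; omega)
        (hAT 0).1 (hAT 0).2 (hAT 1).1 (hAT 2).1 (hAT 3).1 (hTB 1) (hTB 0) (hTB 2)
    | exact qMainB hr T (B 1) (A 0) (A 1) (A 2) (A 3) (B 0) (B 2)
        (fun i => by have hc := count_eq i; rw [show B 3 = B 1 from hpq] at hc; omega)
        (hAT 0).1 (hAT 0).2 (hAT 1).1 (hAT 2).1 (hAT 3).1 (hTB 1) (hTB 0) (hTB 2)
    | exact qMainB hr T (B 2) (A 0) (A 1) (A 2) (A 3) (B 0) (B 1)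
        (fun i => by have hc := count_eq i; rw [show B 3 = B 2 from hpq.symm] at hc; omega)
        (hAT 0).1 (hAT 0).2 (hAT 1).1 (hAT 2).1 (hAT 3).1 (hTB 2) (hTB 0) (hTB 1)
    | exact qMainB hr T (B 2) (A 0) (A 1) (A 2) (A 3) (B 0) (B 1)
        (fun i => by have hc := count_eq i; rw [show B 3 = B 2 from hpq] at hc; omega)
        (hAT 0).1 (hAT 0).2 (hAT 1).1 (hAT 2).1 (hAT 3).1 (hTB 2) (hTB 0) (hTB 1)
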